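/- arXiv:2401.06147 — 15 statements merged into one kernel-verified Lean document; each statement's English description precedes it below -/
import Mathlib

section
/- Let f : S → ℂ satisfy f(x σ(y) z₀) = f(x) f(y) for all x, y ∈ S. Then f(z₀) ≠ 0 if and only if f is not identically zero. -/
/-- If `f : S → ℂ` satisfies `f (x σ(y) z₀) = f x * f y` for all `x y`,
then `f z₀ ≠ 0` iff `f` is not identically zero. -/
theorem kannappan_exp_fz0_ne_zero_iff
    {S : Type*} [Semigroup S] (z₀ : S) (σ : S → S)
    (hσmul : ∀ x y : S, σ (x * y) = σ x * σ y)
    (hσinv : ∀ x : S, σ (σ x) = x)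
    (f : S → ℂ)
    (hf : ∀ x y : S, f (x * σ y * z₀) = f x * f y) :
    f z₀ ≠ 0 ↔ f ≠ 0 := by
  constructor
  · intro h hf0
    exact h (by simp [hf0])
  · intro hne hz
    obtain ⟨x₀, hx₀⟩ := Function.ne_iff.mp hne
    simp only [Pi.zero_apply] at hx₀
    set B := x₀ * σ x₀ * z₀ with hB
    have h1 : f B = f x₀ * f x₀ := hf x₀ x₀
    have h2 : f (B * σ B * z₀) = (f x₀ * f x₀) * (f x₀ * f x₀) := by
      rw [hf B B, h1]
    have h3 : B * σ B * z₀ = (B * (σ x₀ * x₀)) * σ z₀ * z₀ := by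
      simp [hB, hσmul, hσinv, mul_assoc]
    have h4 : f (B * σ B * z₀) = 0 := by
      rw [h3, hf, hz, mul_zero]
    rw [h4] at h2
    have := h2.symm
    simp only [mul_eq_zero, or_self] at this
    exact hx₀ this
end

section
/- Let f : S → ℂ satisfy f(x σ(y) z₀) = f(x) f(y) for all x, y ∈ S. Then there exists a multiplicative function χ : S → ℂ with χ∘σ = χ such that f = χ(z₀) · χ. -/
/-- If `f : S → ℂ` satisfies `f (x σ(y) z₀) = f x * f y` for all `x y`,
then `f = χ(z₀) • χ` for some multiplicative `χ` with `χ ∘ σ = χ`. -/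
theorem kannappan_exp_solution
    {S : Type*} [Semigroup S] (z₀ : S) (σ : S → S)
    (hσmul : ∀ x y : S, σ (x * y) = σ x * σ y)
    (hσinv : ∀ x : S, σ (σ x) = x)
    (f : S → ℂ)
    (hf : ∀ x y : S, f (x * σ y * z₀) = f x * f y) :
    ∃ χ : S → ℂ, (∀ x y : S, χ (x * y) = χ x * χ y) ∧
      (∀ x : S, χ (σ x) = χ x) ∧ (∀ x : S, f x = χ z₀ * χ x) := by
  by_cases hex : ∃ a, f a ≠ 0
  swap
  · push_neg at hex
    exact ⟨fun _ => 0, by simp, by simp, fun x => by simp [hex]⟩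
  obtain ⟨a, ha⟩ := hex
  -- star : f (x * σ z₀ * y) = f x * f y
  have star : ∀ x y : S, f (x * σ z₀ * y) = f x * f y := by
    intro x y
    have h1 := hf a (x * σ z₀ * y)
    rw [hσmul, hσmul, hσinv] at h1
    have hp : a * (σ x * z₀ * σ y) * z₀ = a * σ x * z₀ * σ y * z₀ := by
      simp only [mul_assoc]
    rw [hp, hf (a * σ x * z₀) y, hf a x] at h1
    exact (mul_left_cancel₀ ha (by linear_combination h1)).symm
  -- f z₀ ≠ 0
  have fz0 : f z₀ ≠ 0 := by
    have h1 := hf a (a * σ a * z₀)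
    rw [hσmul, hσmul, hσinv] at h1
    have hp : a * (σ a * a * σ z₀) * z₀ = a * σ a * a * σ z₀ * z₀ := by
      simp only [mul_assoc]
    rw [hp, star (a * σ a * a) z₀, hf a a] at h1
    intro h
    rw [h, mul_zero] at h1
    exact ha (by simpa [ha] using h1.symm)
  -- E2 : f (σ w * z₀) = f (z₀ * w)
  have E2 : ∀ w : S, f (σ w * z₀) = f (z₀ * w) := by
    intro w
    have h2 := hf a (z₀ * w)
    rw [hσmul] at h2
    have hp : a * (σ z₀ * σ w) * z₀ = a * σ z₀ * (σ w * z₀) := by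
      simp only [mul_assoc]
    rw [hp, star a (σ w * z₀)] at h2
    exact mul_left_cancel₀ ha h2
  -- HM : f (x * v) * f z₀ = f x * f (z₀ * v)
  have HM : ∀ x v : S, f (x * v) * f z₀ = f x * f (z₀ * v) := by
    intro x v
    have h3 := hf x (σ v * z₀)
    rw [hσmul, hσinv] at h3
    have hp : x * (v * σ z₀) * z₀ = x * v * σ z₀ * z₀ := by
      simp only [mul_assoc]
    rw [hp, star (x * v) z₀, E2 v] at h3
    exact h3
  -- E4 : f a * f v * f z₀ = f (a * σ z₀) * f (z₀ * v)
  have E4 : ∀ v : S, f a * f v * f z₀ = f (a * σ z₀) * f (z₀ * v) := by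
    intro v
    have h4 := HM (a * σ z₀) v
    rw [star a v] at h4
    exact h4
  -- KEY : f (σ v) * (f z₀ * f z₀) = f (z₀ * v) * f (z₀ * z₀)
  have KEY : ∀ v : S, f (σ v) * (f z₀ * f z₀) = f (z₀ * v) * f (z₀ * z₀) := by
    intro v
    have h5 := hf a (σ v)
    rw [hσinv] at h5
    have k1 := HM (a * v) z₀
    have k2 := HM a v
    apply mul_left_cancel₀ ha
    linear_combination (-(f z₀ * f z₀)) * h5 + f z₀ * k1 + f (z₀ * z₀) * k2
  -- nonvanishing facts
  have e4a := E4 a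
  have hprod : f (a * σ z₀) * f (z₀ * a) ≠ 0 := by
    rw [← e4a]; exact mul_ne_zero (mul_ne_zero ha ha) fz0
  have hc' : f (a * σ z₀) ≠ 0 := left_ne_zero_of_mul hprod
  have hHa : f (z₀ * a) ≠ 0 := right_ne_zero_of_mul hprod
  have k_sa := KEY (σ a)
  rw [hσinv] at k_sa
  have hprod2 : f (z₀ * σ a) * f (z₀ * z₀) ≠ 0 := by
    rw [← k_sa]; exact mul_ne_zero ha (mul_ne_zero fz0 fz0)
  have hHσa : f (z₀ * σ a) ≠ 0 := left_ne_zero_of_mul hprod2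
  have hHzz : f (z₀ * z₀) ≠ 0 := right_ne_zero_of_mul hprod2
  -- R1
  have k_a := KEY a
  have e_sa := E4 (σ a)
  have R1 : f (a * σ z₀) * f (z₀ * σ a) * f z₀ = f a * f (z₀ * a) * f (z₀ * z₀) := by
    linear_combination (-(f z₀)) * e_sa + f a * k_a
  have R1sq : (f (a * σ z₀) * f (z₀ * σ a) * f z₀) * (f (a * σ z₀) * f (z₀ * σ a) * f z₀)
      = (f a * f (z₀ * a) * f (z₀ * z₀)) * (f a * f (z₀ * a) * f (z₀ * z₀)) := by
    linear_combination (f (a * σ z₀) * f (z₀ * σ a) * f z₀ + f a * f (z₀ * a) * f (z₀ * z₀)) * R1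
  -- R3
  have k_aa := KEY (a * a)
  rw [hσmul] at k_aa
  have hp1 : z₀ * (a * a) = z₀ * a * a := (mul_assoc _ _ _).symm
  rw [hp1] at k_aa
  have e_σσ := E4 (σ a * σ a)
  have hp2 : z₀ * (σ a * σ a) = z₀ * σ a * σ a := (mul_assoc _ _ _).symm
  rw [hp2] at e_σσ
  have m1 := HM (z₀ * a) a
  have m2 := HM (z₀ * σ a) (σ a)
  have R3 : f (a * σ z₀) * (f (z₀ * σ a) * f (z₀ * σ a)) * (f z₀ * f z₀)
      = f a * (f (z₀ * a) * f (z₀ * a)) * f (z₀ * z₀) * f z₀ := by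
    linear_combination (f a * (f z₀ * f z₀)) * k_aa + (-(f z₀ * f z₀ * f z₀)) * e_σσ
      + (f a * f z₀ * f (z₀ * z₀)) * m1 + (-(f (a * σ z₀) * (f z₀ * f z₀))) * m2
  -- CKEY : f (a * σ z₀) * f z₀ = f a * f (z₀ * z₀)
  have CKEY : f (a * σ z₀) * f z₀ = f a * f (z₀ * z₀) := by
    have hK : f a * (f (z₀ * a) * f (z₀ * a)) * f (z₀ * z₀) ≠ 0 :=
      mul_ne_zero (mul_ne_zero ha (mul_ne_zero hHa hHa)) hHzz
    apply mul_right_cancel₀ hK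
    linear_combination R1sq - f (a * σ z₀) * R3
  -- put everything together
  refine ⟨fun v => f (z₀ * v) / f z₀, ?_, ?_, ?_⟩
  · intro x y
    have hm := HM (z₀ * x) y
    have hp : z₀ * (x * y) = z₀ * x * y := (mul_assoc _ _ _).symm
    show f (z₀ * (x * y)) / f z₀ = f (z₀ * x) / f z₀ * (f (z₀ * y) / f z₀)
    rw [hp, div_mul_div_comm, div_eq_div_iff fz0 (mul_ne_zero fz0 fz0)]
    linear_combination f z₀ * hm
  · intro x
    have k_x := KEY x
    have e_σx := E4 (σ x)
    have hH : f (z₀ * σ x) = f (z₀ * x) :=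
      mul_left_cancel₀ (mul_ne_zero hc' fz0)
        (by linear_combination (-(f z₀)) * e_σx + f a * k_x - f (z₀ * x) * CKEY)
    show f (z₀ * σ x) / f z₀ = f (z₀ * x) / f z₀
    rw [hH]
  · intro x
    have e_x := E4 x
    have h3 : f x * (f z₀ * f z₀) = f (z₀ * z₀) * f (z₀ * x) :=
      mul_left_cancel₀ ha (by linear_combination f z₀ * e_x + f (z₀ * x) * CKEY)
    show f x = f (z₀ * z₀) / f z₀ * (f (z₀ * x) / f z₀)
    rw [div_mul_div_comm, eq_div_iff (mul_ne_zero fz0 fz0)]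
    exact h3
end

section
/- Let f : S → ℂ be a nonzero function satisfying f(x σ(y) z₀) = f(x) f(y) for all x, y ∈ S. Then f(σ(z₀) z₀) ≠ 0 and, setting β := f(z₀) / f(σ(z₀) z₀), one has f(x σ(y)) = β f(x) f(y) for all x, y ∈ S. -/
/-- If `f ≠ 0` satisfies `f (x σ(y) z₀) = f x * f y`, then
`f (σ(z₀) z₀) ≠ 0` and, with `β := f z₀ / f (σ(z₀) z₀)`, one has
`f (x σ(y)) = β * f x * f y` for all `x y`. -/
theorem kannappan_exp_sine_relation
    {S : Type*} [Semigroup S] (z₀ : S) (σ : S → S)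
    (hσmul : ∀ x y : S, σ (x * y) = σ x * σ y)
    (hσinv : ∀ x : S, σ (σ x) = x)
    (f : S → ℂ) (hf0 : f ≠ 0)
    (hf : ∀ x y : S, f (x * σ y * z₀) = f x * f y) :
    f (σ z₀ * z₀) ≠ 0 ∧
      ∀ x y : S, f (x * σ y) = f z₀ / f (σ z₀ * z₀) * f x * f y := by
  obtain ⟨x₀, hx₀⟩ : ∃ x, f x ≠ 0 := by
    by_contra h
    push_neg at h
    exact hf0 (funext h)
  have hc : f (x₀ * σ x₀ * z₀) = f x₀ * f x₀ := hf x₀ x₀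
  have hcne : f (x₀ * σ x₀ * z₀) ≠ 0 := by
    rw [hc]; exact mul_ne_zero hx₀ hx₀
  -- first: f z₀ ≠ 0
  have hz0 : f z₀ ≠ 0 := by
    have key : f (x₀ * σ x₀ * z₀ * σ (x₀ * σ x₀ * z₀) * z₀)
        = f (x₀ * σ x₀ * z₀) * f (x₀ * σ x₀ * z₀) := hf _ _
    have e1 : x₀ * σ x₀ * z₀ * σ (x₀ * σ x₀ * z₀) * z₀
        = (x₀ * σ x₀ * z₀ * (σ x₀ * x₀)) * σ z₀ * z₀ := by
      simp only [hσmul, hσinv, mul_assoc]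
    rw [e1, hf] at key
    intro h
    rw [h, mul_zero] at key
    exact hcne (mul_self_eq_zero.mp key.symm)
  -- key identity: f (y * z₀) * f z₀ = f y * f (σ z₀ * z₀)
  have hC : ∀ y : S, f (y * z₀) * f z₀ = f y * f (σ z₀ * z₀) := by
    intro y
    have h1 : f (y * z₀ * σ z₀ * z₀) = f (y * z₀) * f z₀ := hf _ _
    have h2 : f (y * σ (σ z₀ * z₀) * z₀) = f y * f (σ z₀ * z₀) := hf _ _
    have e : y * z₀ * σ z₀ * z₀ = y * σ (σ z₀ * z₀) * z₀ := by
      simp only [hσmul, hσinv, mul_assoc]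
    rw [e, h2] at h1
    exact h1.symm
  -- f (σ z₀ * z₀) ≠ 0
  have hne : f (σ z₀ * z₀) ≠ 0 := by
    have := hC (x₀ * σ x₀)
    intro h
    rw [h, mul_zero] at this
    exact mul_ne_zero hcne hz0 this
  refine ⟨hne, fun x y => ?_⟩
  have h1 := hC (x * σ y)
  rw [hf x y] at h1
  field_simp
  linear_combination -h1
end

section
/- Let χ : S → ℂ be a multiplicative function. If p ∈ P_χ, then up ∈ P_χ, pv ∈ P_χ, and upv ∈ P_χ for all u, v ∈ S \ I_χ. -/
variable {S : Type*} [Semigroup S]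

/-- The null space `I_χ` of a multiplicative function `χ`. -/
def nullSpace (χ : S → ℂ) : Set S := {x | χ x = 0}

/-- The set `I_χ² = {x y | x, y ∈ I_χ}`. -/
def nullSpaceSq (χ : S → ℂ) : Set S :=
  {z | ∃ x ∈ nullSpace χ, ∃ y ∈ nullSpace χ, z = x * y}

/-- The set `P_χ` from Ebanks's partition of `I_χ`. -/
def Pchi (χ : S → ℂ) : Set S :=
  {p | p ∈ nullSpace χ \ nullSpaceSq χ ∧
    ∀ u v : S, u ∉ nullSpace χ → v ∉ nullSpace χ →
      u * p ∈ nullSpace χ \ nullSpaceSq χ ∧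
      p * v ∈ nullSpace χ \ nullSpaceSq χ ∧
      u * p * v ∈ nullSpace χ \ nullSpaceSq χ}

/-- If `p ∈ P_χ` then `u*p, p*v, u*p*v ∈ P_χ` for all `u, v ∈ S \ I_χ`. -/
theorem Pchi_mul_mem
    (χ : S → ℂ) (hχ : ∀ x y : S, χ (x * y) = χ x * χ y)
    (p : S) (hp : p ∈ Pchi χ)
    (u v : S) (hu : u ∉ nullSpace χ) (hv : v ∉ nullSpace χ) :
    u * p ∈ Pchi χ ∧ p * v ∈ Pchi χ ∧ u * p * v ∈ Pchi χ := by
  have hmul : ∀ a b : S, a ∉ nullSpace χ → b ∉ nullSpace χ → a * b ∉ nullSpace χ := by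
    intro a b ha hb h
    exact (mul_ne_zero ha hb) ((hχ a b) ▸ h)
  obtain ⟨_, hP⟩ := hp
  refine ⟨⟨(hP u v hu hv).1, ?_⟩, ⟨(hP u v hu hv).2.1, ?_⟩, ⟨(hP u v hu hv).2.2, ?_⟩⟩
  · intro u' v' hu' hv'
    refine ⟨?_, ?_, ?_⟩
    · have := (hP (u' * u) v' (hmul u' u hu' hu) hv').1
      rwa [mul_assoc] at this
    · exact (hP u v' hu hv').2.2
    · have := (hP (u' * u) v' (hmul u' u hu' hu) hv').2.2
      rwa [mul_assoc u' u p] at this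
  · intro u' v' hu' hv'
    refine ⟨?_, ?_, ?_⟩
    · have := (hP u' v hu' hv).2.2
      rwa [mul_assoc] at this
    · have := (hP u (v * v') hu (hmul v v' hv hv')).2.1
      rwa [← mul_assoc] at this
    · have := (hP u' (v * v') hu' (hmul v v' hv hv')).2.2
      rwa [show u' * p * (v * v') = u' * (p * v) * v' by simp only [mul_assoc]] at this
  · intro u' v' hu' hv'
    refine ⟨?_, ?_, ?_⟩
    · have := (hP (u' * u) v (hmul u' u hu' hu) hv).2.2
      rwa [show u' * u * p * v = u' * (u * p * v) by simp only [mul_assoc]] at this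
    · have := (hP u (v * v') hu (hmul v v' hv hv')).2.2
      rwa [← mul_assoc (u * p) v v'] at this
    · have := (hP (u' * u) (v * v') (hmul u' u hu' hu) (hmul v v' hv hv')).2.2
      rwa [show u' * u * p * (v * v') = u' * (u * p * v) * v' by simp only [mul_assoc]] at this
end

section
/- Let f, g : S → ℂ be a solution of the Kannappan-sine subtraction law f(x σ(y) z₀) = f(x) g(y) − f(y) g(x) for all x, y ∈ S, such that f and g are linearly independent. Then f(z₀) = 0. -/
/-- If `f, g` solve the Kannappan-sine subtraction law and are
linearly independent, then `f z₀ = 0`. -/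
theorem kannappan_sine_sub_f_z0_eq_zero
    {S : Type*} [Semigroup S] (z₀ : S) (σ : S → S)
    (hσmul : ∀ x y : S, σ (x * y) = σ x * σ y)
    (hσinv : ∀ x : S, σ (σ x) = x)
    (f g : S → ℂ)
    (hfg : ∀ x y : S, f (x * σ y * z₀) = f x * g y - f y * g x)
    (hind : ∀ a b : ℂ, (∀ x : S, a * f x + b * g x = 0) → a = 0 ∧ b = 0) :
    f z₀ = 0 := by
  by_contra hfz
  set Φ : S → ℂ := fun y => g y * g z₀ - g (y * σ z₀ * z₀) with hΦ
  -- (A): f z₀ * g (x * σ y * z₀) = f x * Φ y - f z₀ * g x * g y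
  have hA : ∀ x y : S, f z₀ * g (x * σ y * z₀) = f x * Φ y - f z₀ * g x * g y := by
    intro x y
    have e1 := hfg (x * σ y * z₀) z₀
    have e2 := hfg x (y * σ z₀ * z₀)
    have harg : x * σ (y * σ z₀ * z₀) * z₀ = x * σ y * z₀ * σ z₀ * z₀ := by
      simp only [hσmul, hσinv, mul_assoc]
    rw [harg] at e2
    have e3 := hfg y z₀
    have e4 := hfg x y
    simp only [hΦ]
    linear_combination e1 - e2 + g x * e3 + g z₀ * e4
  -- (B) and (C)
  have hBC : ∀ y z : S, (f z₀ * g (y * σ z₀ * z) = f z₀ * g y * g z - f z * Φ y) ∧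
      (f (y * σ z₀ * z) = f y * g z - f z * g y) := by
    intro y z
    have key : ∀ x : S,
        (f z₀ * g y * g z - f z * Φ y - f z₀ * g (y * σ z₀ * z)) * f x +
        (f z₀ * f (y * σ z₀ * z) - f z₀ * f y * g z + f z₀ * f z * g y) * g x = 0 := by
      intro x
      have e1 := hfg (x * σ y * z₀) z
      have e2 := hfg x (y * σ z₀ * z)
      have harg : x * σ (y * σ z₀ * z) * z₀ = x * σ y * z₀ * σ z * z₀ := by
        simp only [hσmul, hσinv, mul_assoc]
      rw [harg] at e2
      have e4 := hfg x y
      have eA := hA x y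
      linear_combination f z₀ * e2 - f z₀ * e1 - f z₀ * g z * e4 + f z * eA
    obtain ⟨h1, h2⟩ := hind _ _ key
    constructor
    · linear_combination -h1
    · have h3 : f z₀ * (f (y * σ z₀ * z) - (f y * g z - f z * g y)) = 0 := by
        linear_combination h2
      rcases mul_eq_zero.mp h3 with h | h
      · exact absurd h hfz
      · linear_combination h
  -- (D)
  have hD : ∀ w : S, f (σ w * z₀) = f (z₀ * w) ∧ g (σ w * z₀) = g (z₀ * w) := by
    intro w
    have key : ∀ y : S,
        (g (σ w * z₀) - g (z₀ * w)) * f y + (f (z₀ * w) - f (σ w * z₀)) * g y = 0 := by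
      intro y
      have e1 := (hBC y (σ w * z₀)).2
      have e2 := hfg y (z₀ * w)
      have harg : y * σ (z₀ * w) * z₀ = y * σ z₀ * (σ w * z₀) := by
        simp only [hσmul, mul_assoc]
      rw [harg] at e2
      linear_combination e2 - e1
    obtain ⟨h1, h2⟩ := hind _ _ key
    exact ⟨by linear_combination -h2, by linear_combination h1⟩
  -- (E)
  have hE : ∀ y : S, f z₀ * Φ y = 2 * g z₀ * f z₀ * g y - Φ z₀ * f y := by
    intro y
    have eA := hA y z₀
    simp only [hΦ] at eA ⊢
    linear_combination -eA
  -- (F)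
  have hF : ∀ x : S, g z₀ * f (z₀ * x) = f z₀ * g (z₀ * x) := by
    intro x
    have key : ∀ y : S,
        (2 * g z₀ * f z₀ * g (z₀ * x) - 2 * Φ z₀ * f (z₀ * x)) * f y +
        (2 * g z₀ * f z₀ * f (z₀ * x) - 2 * f z₀ * f z₀ * g (z₀ * x)) * g y = 0 := by
      intro y
      have e1 := (hBC y (σ x * z₀)).1
      have eA := hA y (z₀ * x)
      have harg : y * σ (z₀ * x) * z₀ = y * σ z₀ * (σ x * z₀) := by
        simp only [hσmul, mul_assoc]
      rw [harg] at eA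
      obtain ⟨hDf, hDg⟩ := hD x
      have eEy := hE y
      have eEzx := hE (z₀ * x)
      linear_combination f z₀ * e1 - f z₀ * eA + f z₀ * f z₀ * g y * hDg
        - f z₀ * Φ y * hDf - f (z₀ * x) * eEy - f y * eEzx
    obtain ⟨h1, h2⟩ := hind _ _ key
    have : f z₀ * (2 * (g z₀ * f (z₀ * x) - f z₀ * g (z₀ * x))) = 0 := by
      linear_combination h2
    rcases mul_eq_zero.mp this with h | h
    · exact absurd h hfz
    · linear_combination h / 2
  -- (F'): for all u, g z₀ * f (u * z₀) = f z₀ * g (u * z₀)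
  have hF' : ∀ u : S, g z₀ * f (u * z₀) = f z₀ * g (u * z₀) := by
    intro u
    obtain ⟨hDf, hDg⟩ := hD (σ u)
    rw [hσinv] at hDf hDg
    rw [hDf, hDg]
    exact hF (σ u)
  -- final contradiction
  have key2 : ∀ y : S, ∀ x : S,
      (Φ z₀ * f y - g z₀ * f z₀ * g y) * f x +
      (f z₀ * f z₀ * g y - g z₀ * f z₀ * f y) * g x = 0 := by
    intro y x
    have e1 := hF' (x * σ y)
    have e2 := hfg x y
    have eA := hA x y
    have eE := hE y
    linear_combination f z₀ * e1 - g z₀ * f z₀ * e2 + f z₀ * eA + f x * eE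
  have key3 : ∀ y : S, (g z₀ * f z₀) * f y + (-(f z₀ * f z₀)) * g y = 0 := by
    intro y
    have := (hind _ _ (key2 y)).2
    linear_combination -this
  have := (hind _ _ key3).2
  have : f z₀ * f z₀ = 0 := by linear_combination -this
  rcases mul_eq_zero.mp this with h | h <;> exact hfz h
end

section
/- Let f, g : S → ℂ be a solution of the Kannappan-sine subtraction law f(x σ(y) z₀) = f(x) g(y) − f(y) g(x) for all x, y ∈ S, such that f and g are linearly independent. Then for all x, y ∈ S: g(σ(z₀) z₀) f(x σ(y)) = g(z₀) [f(x) g(y) − f(y) g(x)] + f(σ(z₀) z₀) g(x σ(y)). -/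
/-- If `f, g` solve the Kannappan-sine subtraction law and are
linearly independent, then
`g(σ(z₀)z₀) f(xσ(y)) = g(z₀)[f(x)g(y) − f(y)g(x)] + f(σ(z₀)z₀) g(xσ(y))`. -/
theorem kannappan_sine_sub_key_identity
    {S : Type*} [Semigroup S] (z₀ : S) (σ : S → S)
    (hσmul : ∀ x y : S, σ (x * y) = σ x * σ y)
    (hσinv : ∀ x : S, σ (σ x) = x)
    (f g : S → ℂ)
    (hfg : ∀ x y : S, f (x * σ y * z₀) = f x * g y - f y * g x)
    (hind : ∀ a b : ℂ, (∀ x : S, a * f x + b * g x = 0) → a = 0 ∧ b = 0) :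
    ∀ x y : S,
      g (σ z₀ * z₀) * f (x * σ y) =
        g z₀ * (f x * g y - f y * g x) + f (σ z₀ * z₀) * g (x * σ y) := by
  -- f is not identically zero
  have hfne : ∃ v, f v ≠ 0 := by
    by_contra h
    push_neg at h
    have := (hind 1 0 (by intro x; simp [h x])).1
    exact one_ne_zero this
  obtain ⟨v₀, hv₀⟩ := hfne
  -- abbreviation for k
  -- (II): f z₀ * g (x σ y z₀) = f x * k y - f z₀ * g x * g y
  have hII : ∀ x y : S, f z₀ * g (x * σ y * z₀) =
      f x * (g y * g z₀ - g (y * σ z₀ * z₀)) - f z₀ * g x * g y := by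
    intro x y
    have e1 := hfg (x * σ y * z₀) z₀
    have e2 := hfg x (y * σ z₀ * z₀)
    have harg : x * σ (y * σ z₀ * z₀) * z₀ = x * σ y * z₀ * σ z₀ * z₀ := by
      rw [hσmul, hσmul, hσinv]
      simp [mul_assoc]
    rw [harg] at e2
    have e3 := hfg y z₀
    have e4 := hfg x y
    linear_combination e1 - e2 + g x * e3 + g z₀ * e4
  -- (A) and (B)
  have hAB : ∀ y w : S,
      (f z₀ * g y * g w - f w * (g y * g z₀ - g (y * σ z₀ * z₀))
          - f z₀ * g (y * σ z₀ * w) = 0) ∧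
      (f z₀ * (f (y * σ z₀ * w) - f y * g w + f w * g y) = 0) := by
    intro y w
    apply hind
    intro x
    have e1 := hfg (x * σ y * z₀) w
    have e2 := hfg x (y * σ z₀ * w)
    have harg : x * σ (y * σ z₀ * w) * z₀ = x * σ y * z₀ * σ w * z₀ := by
      rw [hσmul, hσmul, hσinv]
      simp [mul_assoc]
    rw [harg] at e2
    have e4 := hfg x y
    have eII := hII x y
    linear_combination -(f z₀) * e1 + f z₀ * e2 - f z₀ * g w * e4 + f w * eII
  have hA : ∀ y w : S, f z₀ * g (y * σ z₀ * w) =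
      f z₀ * g y * g w - f w * (g y * g z₀ - g (y * σ z₀ * z₀)) := by
    intro y w; linear_combination -(hAB y w).1
  have hB : ∀ y w : S, f z₀ * f (y * σ z₀ * w) =
      f z₀ * (f y * g w - f w * g y) := by
    intro y w; linear_combination (hAB y w).2
  -- the central claim : f z₀ = 0
  have hc0 : f z₀ = 0 := by
    by_contra hcne
    have hkey : ∀ x w : S,
        f w * (g x * g z₀ - g (x * σ z₀ * z₀))
          + f x * (g w * g z₀ - g (w * σ z₀ * z₀))
          - 2 * f z₀ * g x * g w = 0 := by
      intro x w
      have e1 := hB (x * σ z₀ * w) v₀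
      have e2 := hB x (w * σ z₀ * v₀)
      have harg : x * σ z₀ * w * σ z₀ * v₀ = x * σ z₀ * (w * σ z₀ * v₀) := by
        simp [mul_assoc]
      rw [harg] at e1
      have e3 := hB x w
      have e4 := hB w v₀
      have e5 := hA x w
      have e6 := hA w v₀
      have hmain : f z₀ * f v₀ *
          (f w * (g x * g z₀ - g (x * σ z₀ * z₀))
            + f x * (g w * g z₀ - g (w * σ z₀ * z₀))
            - 2 * f z₀ * g x * g w) = 0 := by
        linear_combination -(f z₀) * e1 + f z₀ * e2 - f z₀ * g v₀ * e3
          - f z₀ * g x * e4 + f z₀ * f v₀ * e5 + f z₀ * f x * e6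
      rcases mul_eq_zero.mp hmain with h | h
      · rcases mul_eq_zero.mp h with h | h
        · exact absurd h hcne
        · exact absurd h hv₀
      · exact h
    have hsub : ∀ x : S, f v₀ * (g x * g z₀ - g (x * σ z₀ * z₀)) =
        2 * f z₀ * g v₀ * g x
          - (g v₀ * g z₀ - g (v₀ * σ z₀ * z₀)) * f x := by
      intro x
      linear_combination hkey x v₀
    have hBzero : ∀ w : S,
        (2 * f z₀ * g v₀ * g w
            - 2 * (g v₀ * g z₀ - g (v₀ * σ z₀ * z₀)) * f w = 0) ∧
        (2 * f z₀ * g v₀ * f w - 2 * f z₀ * f v₀ * g w = 0) := by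
      intro w
      apply hind
      intro x
      linear_combination f v₀ * hkey x w - f w * hsub x - f x * hsub w
    have hfinal := hind (2 * f z₀ * g v₀) (-(2 * f z₀ * f v₀)) (by
      intro w
      linear_combination (hBzero w).2)
    have h2 : (2 : ℂ) * f z₀ * f v₀ = 0 := by linear_combination -hfinal.2
    rcases mul_eq_zero.mp h2 with h | h
    · rcases mul_eq_zero.mp h with h | h
      · norm_num at h
      · exact hcne h
    · exact hv₀ h
  -- finish
  intro x y
  have e1 := hfg (x * σ y * z₀) z₀
  have e3 := hfg (x * σ y) (σ z₀ * z₀)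
  have harg : x * σ y * σ (σ z₀ * z₀) * z₀ = x * σ y * z₀ * σ z₀ * z₀ := by
    rw [hσmul, hσinv]
    simp [mul_assoc]
  rw [harg] at e3
  have e4 := hfg x y
  linear_combination e1 - e3 + g z₀ * e4 - g (x * σ y * z₀) * hc0
end

section
/- Let f, g : S → ℂ be a solution of the Kannappan-sine subtraction law f(x σ(y) z₀) = f(x) g(y) − f(y) g(x) for all x, y ∈ S, such that f and g are linearly independent. Then g(z₀) ≠ 0. -/
/-- If `f, g` solve the Kannappan-sine subtraction law and are
linearly independent, then `g z₀ ≠ 0`. -/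
theorem kannappan_sine_sub_g_z0_ne_zero
    {S : Type*} [Semigroup S] (z₀ : S) (σ : S → S)
    (hσmul : ∀ x y : S, σ (x * y) = σ x * σ y)
    (hσinv : ∀ x : S, σ (σ x) = x)
    (f g : S → ℂ)
    (hfg : ∀ x y : S, f (x * σ y * z₀) = f x * g y - f y * g x)
    (hind : ∀ a b : ℂ, (∀ x : S, a * f x + b * g x = 0) → a = 0 ∧ b = 0) :
    g z₀ ≠ 0 := by
  intro hgz
  -- f is not identically zero
  have hfne : ∃ u, f u ≠ 0 := by
    by_contra h
    push_neg at h
    have := hind 1 0 (fun x => by simp [h x])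
    exact one_ne_zero this.1
  -- key identity: expand f (v * σ x * y * σ w * z₀) two ways
  have key19 : ∀ v x y w : S,
      f (v * σ x * y) * g w - f w * g (v * σ x * y)
        = f v * g (x * σ y * w) - f (x * σ y * w) * g v := by
    intro v x y w
    have h1 := hfg (v * σ x * y) w
    have h2 := hfg v (x * σ y * w)
    have harg : v * σ x * y * σ w * z₀ = v * σ (x * σ y * w) * z₀ := by
      simp only [hσmul, hσinv, mul_assoc]
    rw [harg] at h1
    exact h1.symm.trans h2
  by_cases hc : f z₀ = 0
  · -- case f z₀ = 0
    have key : ∀ x y : S, f x * g y - f y * g x = 0 := by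
      intro x y
      have h := hind (g (x * σ y * z₀)) (-(f x * g y - f y * g x)) ?_
      · linear_combination -h.2
      · intro v
        have h19 := key19 v x y z₀
        have hf := hfg x y
        rw [hgz, hc, hf] at h19
        linear_combination -h19
    have hf0 : ∀ y, f y = 0 := by
      intro y
      have h := hind (g y) (-(f y)) (fun x => by linear_combination key x y)
      linear_combination -h.2
    have := hind 1 0 (fun x => by simp [hf0 x])
    exact one_ne_zero this.1
  · -- case f z₀ ≠ 0
    have key15 : ∀ v x : S, -(f z₀) * g (v * σ x * z₀)
        = f v * g (x * σ z₀ * z₀) + f z₀ * g x * g v := by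
      intro v x
      have h := key19 v x z₀ z₀
      have h2 := hfg x z₀
      rw [hgz] at h h2
      linear_combination h - g v * h2
    have hGz : g (z₀ * σ z₀ * z₀) = 0 := by
      have h := key15 z₀ z₀
      rw [hgz] at h
      have h2 : f z₀ * g (z₀ * σ z₀ * z₀) = 0 := by linear_combination (-1/2 : ℂ) * h
      exact (mul_eq_zero.mp h2).resolve_left hc
    have hG : ∀ v, g (v * σ z₀ * z₀) = 0 := by
      intro v
      have h := key15 v z₀
      rw [hGz, hgz] at h
      have h2 : f z₀ * g (v * σ z₀ * z₀) = 0 := by linear_combination -h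
      exact (mul_eq_zero.mp h2).resolve_left hc
    have key16 : ∀ v x : S, g (v * σ x * z₀) = -(g x * g v) := by
      intro v x
      have h := key15 v x
      rw [hG x] at h
      have h2 : f z₀ * (g (v * σ x * z₀) - -(g x * g v)) = 0 := by linear_combination -h
      have := (mul_eq_zero.mp h2).resolve_left hc
      linear_combination this
    have key2021 : ∀ x w : S,
        g (x * σ z₀ * w) = g x * g w ∧ f (x * σ z₀ * w) = f x * g w - f w * g x := by
      intro x w
      have h := hind (g x * g w - g (x * σ z₀ * w))
        (f (x * σ z₀ * w) - (f x * g w - f w * g x)) ?_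
      · constructor
        · linear_combination -h.1
        · linear_combination h.2
      · intro v
        have h19 := key19 v x z₀ w
        rw [hfg v x, key16 v x] at h19
        linear_combination h19
    obtain ⟨u, hu⟩ := hfne
    have hg0 : ∀ x, g x = 0 := by
      intro x
      have e1 : f (x * σ z₀ * x * σ z₀ * u)
          = f (x * σ z₀ * x) * g u - f u * g (x * σ z₀ * x) :=
        (key2021 (x * σ z₀ * x) u).2
      have e2 : f (x * σ z₀ * (x * σ z₀ * u))
          = f x * g (x * σ z₀ * u) - f (x * σ z₀ * u) * g x :=
        (key2021 x (x * σ z₀ * u)).2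
      have hgxx : g (x * σ z₀ * x) = g x * g x := (key2021 x x).1
      have hfxx : f (x * σ z₀ * x) = f x * g x - f x * g x := (key2021 x x).2
      have hgxu : g (x * σ z₀ * u) = g x * g u := (key2021 x u).1
      have hfxu : f (x * σ z₀ * u) = f x * g u - f u * g x := (key2021 x u).2
      have harg : x * σ z₀ * x * σ z₀ * u = x * σ z₀ * (x * σ z₀ * u) := by
        simp only [mul_assoc]
      rw [harg] at e1
      rw [e2, hgxu, hfxu, hgxx, hfxx] at e1
      have h2 : f u * (g x * g x) = 0 := by linear_combination e1 / 2
      have := (mul_eq_zero.mp h2).resolve_left hu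
      exact (mul_self_eq_zero).mp this
    have := hind 0 1 (fun x => by simp [hg0 x])
    exact one_ne_zero this.2
end

section
/- Let f, g : S → ℂ be a solution of the Kannappan-sine subtraction law f(x σ(y) z₀) = f(x) g(y) − f(y) g(x) for all x, y ∈ S, such that f and g are linearly independent. If g(σ(z₀) z₀) = 0, then f(σ(z₀) z₀) ≠ 0. -/
/-- If `f, g` solve the Kannappan-sine subtraction law, are
linearly independent, and `g(σ(z₀)z₀) = 0`, then `f(σ(z₀)z₀) ≠ 0`. -/
theorem kannappan_sine_sub_f_sigmaz0z0_ne_zero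
    {S : Type*} [Semigroup S] (z₀ : S) (σ : S → S)
    (hσmul : ∀ x y : S, σ (x * y) = σ x * σ y)
    (hσinv : ∀ x : S, σ (σ x) = x)
    (f g : S → ℂ)
    (hfg : ∀ x y : S, f (x * σ y * z₀) = f x * g y - f y * g x)
    (hind : ∀ a b : ℂ, (∀ x : S, a * f x + b * g x = 0) → a = 0 ∧ b = 0)
    (hg0 : g (σ z₀ * z₀) = 0) :
    f (σ z₀ * z₀) ≠ 0 := by
  intro hf0
  -- Step 1: linear independence gives two points with nonzero "determinant".
  have hL : ∃ x₁ x₂ : S, f x₁ * g x₂ - f x₂ * g x₁ ≠ 0 := by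
    by_contra h
    push_neg at h
    by_cases hf : ∀ x : S, f x = 0
    · have h1 := hind 1 0 (fun x => by simp [hf x])
      exact one_ne_zero h1.1
    · push_neg at hf
      obtain ⟨x₀, hx₀⟩ := hf
      have h2 := hind (g x₀) (-(f x₀)) (fun x => by linear_combination h x x₀)
      exact hx₀ (neg_eq_zero.mp h2.2)
  obtain ⟨x₁, x₂, hD⟩ := hL
  -- Step 2: key lemma (†).
  have key : ∀ c : S, (∀ x : S, f (x * σ c * z₀) = 0) → f c = 0 ∧ g c = 0 := by
    intro c hc
    have e1 : f x₁ * g c - f c * g x₁ = 0 := by rw [← hfg]; exact hc x₁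
    have e2 : f x₂ * g c - f c * g x₂ = 0 := by rw [← hfg]; exact hc x₂
    constructor
    · have h3 : f c * (f x₁ * g x₂ - f x₂ * g x₁) = 0 := by
        linear_combination f x₂ * e1 - f x₁ * e2
      exact (mul_eq_zero.mp h3).resolve_right hD
    · have h3 : g c * (f x₁ * g x₂ - f x₂ * g x₁) = 0 := by
        linear_combination g x₂ * e1 - g x₁ * e2
      exact (mul_eq_zero.mp h3).resolve_right hD
  -- Step 3: f and g vanish on S·(σz₀·z₀).
  have Zd : ∀ y : S, f (y * (σ z₀ * z₀)) = 0 ∧ g (y * (σ z₀ * z₀)) = 0 := by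
    intro y
    apply key
    intro x
    have harg : x * σ (y * (σ z₀ * z₀)) * z₀ = (x * σ y) * σ (σ z₀ * z₀) * z₀ := by
      rw [hσmul, hσmul, hσinv]
      simp [mul_assoc]
    rw [harg, hfg, hg0, hf0]
    ring
  -- Step 4: f z₀ = g z₀ = 0.
  have hz₀ : f z₀ = 0 ∧ g z₀ = 0 := by
    apply key
    intro x
    have harg : x * σ z₀ * z₀ = x * (σ z₀ * z₀) := mul_assoc x (σ z₀) z₀
    rw [harg]
    exact (Zd x).1
  -- Step 5: f vanishes on S·z₀.
  have Zz : ∀ y : S, f (y * z₀) = 0 := by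
    intro y
    refine (key (y * z₀) ?_).1
    intro x
    have harg : x * σ (y * z₀) * z₀ = (x * σ y) * σ z₀ * z₀ := by
      rw [hσmul]
      simp [mul_assoc]
    rw [harg, hfg, hz₀.1, hz₀.2]
    ring
  -- Step 6: contradiction.
  apply hD
  rw [← hfg x₁ x₂]
  exact Zz (x₁ * σ x₂)
end

section
/- Let f, g : S → ℂ be a solution of the Kannappan-sine subtraction law f(x σ(y) z₀) = f(x) g(y) − f(y) g(x) for all x, y ∈ S, such that f and g are linearly independent and g(σ(z₀) z₀) = 0. Then f(σ(z₀) z₀) ≠ 0 and, setting γ := g(z₀) / f(σ(z₀) z₀), one has g(x σ(y)) = γ g(x) f(y) − γ f(x) g(y) for all x, y ∈ S. -/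
/-- Case 1 of the main theorem. If `f, g` solve the Kannappan-sine
subtraction law, are linearly independent and `g(σ(z₀)z₀) = 0`, then
`f(σ(z₀)z₀) ≠ 0` and with `γ := g(z₀)/f(σ(z₀)z₀)` one has
`g(xσ(y)) = γ g(x) f(y) − γ f(x) g(y)`. -/
theorem kannappan_sine_sub_case1
    {S : Type*} [Semigroup S] (z₀ : S) (σ : S → S)
    (hσmul : ∀ x y : S, σ (x * y) = σ x * σ y)
    (hσinv : ∀ x : S, σ (σ x) = x)
    (f g : S → ℂ)
    (hfg : ∀ x y : S, f (x * σ y * z₀) = f x * g y - f y * g x)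
    (hind : ∀ a b : ℂ, (∀ x : S, a * f x + b * g x = 0) → a = 0 ∧ b = 0)
    (hg0 : g (σ z₀ * z₀) = 0) :
    f (σ z₀ * z₀) ≠ 0 ∧
      ∀ x y : S,
        g (x * σ y) =
          g z₀ / f (σ z₀ * z₀) * g x * f y -
            g z₀ / f (σ z₀ * z₀) * f x * g y := by
  -- f(σ(z₀)z₀z₀) = 0
  have hez : f (σ z₀ * z₀ * z₀) = 0 := by
    have h := hfg (σ z₀) (σ z₀)
    rw [hσinv] at h
    linear_combination h
  -- Identity T1
  have hT1 : ∀ w x y : S, g z₀ * f (w * σ x * y) - f z₀ * g (w * σ x * y)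
      = f w * g (x * σ y * z₀) - (f x * g y - f y * g x) * g w := by
    intro w x y
    have h1 := hfg (w * σ x * y) z₀
    have h2 := hfg w (x * σ y * z₀)
    have h3 := hfg x y
    have hw : w * σ x * y * σ z₀ * z₀ = w * σ (x * σ y * z₀) * z₀ := by
      simp only [hσmul, hσinv, mul_assoc]
    rw [hw] at h1
    linear_combination h2 - h1 - g w * h3
  -- Identity T2
  have hT2 : ∀ w x y : S, f w * g (x * σ y * z₀) - (f x * g y - f y * g x) * g w
      = f (y * σ z₀ * w) * g x - f x * g (y * σ z₀ * w) := by
    intro w x y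
    have h1 := hfg (x * σ y * z₀) w
    have h2 := hfg x (y * σ z₀ * w)
    have h3 := hfg x y
    have hw : x * σ y * z₀ * σ w * z₀ = x * σ (y * σ z₀ * w) * z₀ := by
      simp only [hσmul, hσinv, mul_assoc]
    rw [hw] at h1
    linear_combination h1 - h2 + g w * h3
  -- Identity M1
  have hM1 : ∀ Y : S, g z₀ * f (Y * z₀) - f z₀ * g (Y * z₀)
      = -(f (σ z₀ * z₀)) * g Y := by
    intro Y
    have h1 := hfg (Y * z₀) z₀
    have h2 := hfg Y (σ z₀ * z₀)
    have hw : Y * σ (σ z₀ * z₀) * z₀ = Y * z₀ * σ z₀ * z₀ := by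
      simp only [hσmul, hσinv, mul_assoc]
    rw [hw, hg0] at h2
    linear_combination h2 - h1
  -- K ≡ 0 is impossible
  have hKzero : (∀ x y : S, f x * g y - f y * g x = 0) → False := by
    intro h
    have hgz : ∀ x : S, g x = 0 := by
      intro y
      exact (hind (g y) (-(f y)) (fun x => by linear_combination h x y)).1
    have := (hind 0 1 (fun x => by rw [hgz x]; ring)).2
    exact one_ne_zero this
  -- not both f z₀ and g z₀ are zero
  have hfgz0 : ¬ (f z₀ = 0 ∧ g z₀ = 0) := by
    rintro ⟨hf0, hg0'⟩
    apply hKzero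
    intro x y
    have h := hind (g (x * σ y * z₀)) (-(f x * g y - f y * g x)) (fun w => by
      have h := hT1 w x y
      rw [hf0, hg0'] at h
      linear_combination -h)
    linear_combination -h.2
  -- f(σ z₀ * z₀) ≠ 0
  have hfe : f (σ z₀ * z₀) ≠ 0 := by
    intro hfe0
    have hdag : ∀ x : S, g z₀ * f (x * z₀) - f z₀ * g (x * z₀) = 0 := by
      intro x
      have h := hM1 x
      rw [hfe0] at h
      linear_combination h
    have hstep : ∀ y : S, g z₀ * f y + (-(f z₀)) * g y = 0 := by
      intro y
      have h := hind (-(g (y * σ z₀ * z₀))) (f (y * σ z₀ * z₀)) (fun x => by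
        have t := hT2 z₀ x y
        have hd := hdag (x * σ y)
        have h3 := hfg x y
        linear_combination g z₀ * h3 - hd - t)
      have h3 := hfg y z₀
      linear_combination h.2 - h3
    have h := hind (g z₀) (-(f z₀)) hstep
    exact hfgz0 ⟨neg_eq_zero.mp h.2, h.1⟩
  -- f z₀ = 0
  have hfz : f z₀ = 0 := by
    by_contra hfz0
    -- find y₁ with f z₀ * g y₁ - f y₁ * g z₀ ≠ 0
    have hy : ∃ y₁ : S, f z₀ * g y₁ - f y₁ * g z₀ ≠ 0 := by
      by_contra hc
      push_neg at hc
      have h := hind (-(g z₀)) (f z₀) (fun y => by linear_combination hc y)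
      exact hfz0 h.2
    obtain ⟨y₁, hd⟩ := hy
    -- D* identity
    have hDs : ∀ u y : S, f u * g (σ z₀ * y) - f (σ z₀ * y) * g u
        = f (u * z₀) * g y - f y * g (u * z₀) := by
      intro u y
      have h1 := hfg (u * z₀) y
      have h2 := hfg u (σ z₀ * y)
      have hw : u * σ (σ z₀ * y) * z₀ = u * z₀ * σ y * z₀ := by
        simp only [hσmul, hσinv, mul_assoc]
      rw [hw] at h2
      linear_combination h1 - h2
    -- d * f(u z₀) = C1 * f u + C2 * g u
    have hdd : ∀ u : S, (f z₀ * g y₁ - f y₁ * g z₀) * f (u * z₀)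
        = (f z₀ * g (σ z₀ * y₁)) * f u
          + (f y₁ * f (σ z₀ * z₀) - f z₀ * f (σ z₀ * y₁)) * g u := by
      intro u
      have h1 := hDs u y₁
      have h2 := hM1 u
      linear_combination (-(f z₀)) * h1 - f y₁ * h2
    -- from u = σ z₀ * z₀ : g (σ z₀ * y₁) = 0
    have hgy1 : g (σ z₀ * y₁) = 0 := by
      have h := hdd (σ z₀ * z₀)
      rw [hez, hg0] at h
      have : f z₀ * g (σ z₀ * y₁) * f (σ z₀ * z₀) = 0 := by linear_combination -h
      rcases mul_eq_zero.mp this with h' | h'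
      · rcases mul_eq_zero.mp h' with h'' | h''
        · exact absurd h'' hfz0
        · exact h''
      · exact absurd h' hfe
    have hB : ∀ u : S, (f z₀ * g y₁ - f y₁ * g z₀) * f (u * z₀)
        = (f y₁ * f (σ z₀ * z₀) - f z₀ * f (σ z₀ * y₁)) * g u := by
      intro u
      have h := hdd u
      rw [hgy1] at h
      linear_combination h
    -- show g (σ z₀) = 0
    have hgsz : g (σ z₀) = 0 := by
      have key : ∀ u : S,
          ((f z₀ * g y₁ - f y₁ * g z₀)^2 * f z₀ * g (σ z₀)) * f u
          + (-((f z₀ * g y₁ - f y₁ * g z₀)^2 * f z₀ * f (σ z₀))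
             - (f y₁ * f (σ z₀ * z₀) - f z₀ * f (σ z₀ * y₁))^2 * g z₀
             - (f y₁ * f (σ z₀ * z₀) - f z₀ * f (σ z₀ * y₁)) * f (σ z₀ * z₀)
               * (f z₀ * g y₁ - f y₁ * g z₀)) * g u = 0 := by
        intro u
        have h4 := hfg u (σ z₀)
        have hw : u * σ (σ z₀) * z₀ = u * z₀ * z₀ := by rw [hσinv]
        rw [hw] at h4
        have hB1 := hB u
        have hB2 := hB (u * z₀)
        have hM := hM1 u
        -- d^2 * f z₀ * f(u z₀ z₀) = B * f z₀ * d * g(u z₀)  etc.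
        linear_combination (-((f z₀ * g y₁ - f y₁ * g z₀)^2 * f z₀)) * h4
          + (f z₀ * g y₁ - f y₁ * g z₀) * f z₀ * hB2
          - (f y₁ * f (σ z₀ * z₀) - f z₀ * f (σ z₀ * y₁))
            * (f z₀ * g y₁ - f y₁ * g z₀) * hM
          + (f y₁ * f (σ z₀ * z₀) - f z₀ * f (σ z₀ * y₁)) * g z₀ * hB1
      have h := (hind ((f z₀ * g y₁ - f y₁ * g z₀)^2 * f z₀ * g (σ z₀))
          (-((f z₀ * g y₁ - f y₁ * g z₀)^2 * f z₀ * f (σ z₀))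
             - (f y₁ * f (σ z₀ * z₀) - f z₀ * f (σ z₀ * y₁))^2 * g z₀
             - (f y₁ * f (σ z₀ * z₀) - f z₀ * f (σ z₀ * y₁)) * f (σ z₀ * z₀)
               * (f z₀ * g y₁ - f y₁ * g z₀)) key).1
      rcases mul_eq_zero.mp h with h'' | h''
      · rcases mul_eq_zero.mp h'' with h3 | h3
        · exact absurd h3 (pow_ne_zero 2 hd)
        · exact absurd h3 hfz0
      · exact h''
    -- u = σ z₀ gives f (σ z₀ * z₀) = 0, contradiction
    have h := hB (σ z₀)
    rw [hgsz] at h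
    have : f (σ z₀ * z₀) = 0 := by
      have := mul_eq_zero.mp (by linear_combination h :
        (f z₀ * g y₁ - f y₁ * g z₀) * f (σ z₀ * z₀) = 0)
      rcases this with h' | h'
      · exact absurd h' hd
      · exact h'
    exact hfe this
  -- g z₀ ≠ 0
  have hgz : g z₀ ≠ 0 := fun h => hfgz0 ⟨hfz, h⟩
  -- M'
  have hM' : ∀ Y : S, g z₀ * f (Y * z₀) = -(f (σ z₀ * z₀)) * g Y := by
    intro Y
    have h := hM1 Y
    rw [hfz] at h
    linear_combination h
  -- g (σ z₀) = - g z₀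
  have hR : g (σ z₀) = -(g z₀) := by
    have h := hM' (σ z₀)
    exact mul_left_cancel₀ hfe (by linear_combination h)
  -- g (σ z₀ * z₀ * z₀) = g z₀ ^ 2
  have hgez : g (σ z₀ * z₀ * z₀) = g z₀ * g z₀ := by
    have h4 := hfg (σ z₀ * z₀) (σ z₀)
    have hw : σ z₀ * z₀ * σ (σ z₀) * z₀ = σ z₀ * z₀ * z₀ * z₀ := by
      rw [hσinv]
    rw [hw, hR, hg0] at h4
    have hM := hM' (σ z₀ * z₀ * z₀)
    rw [h4] at hM
    apply mul_left_cancel₀ (neg_ne_zero.mpr hfe)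
    linear_combination -hM
  -- f (z₀ * σ x * y) = -(K x y)
  have hfz0xy : ∀ x y : S, f (z₀ * σ x * y) = -(f x * g y - f y * g x) := by
    intro x y
    have h := hT1 z₀ x y
    rw [hfz] at h
    exact mul_left_cancel₀ hgz (by linear_combination h)
  -- heart: f E * g (E * σ x * y) = K x y * g z₀ ^ 2
  have hheart : ∀ x y : S, f (σ z₀ * z₀) * g (σ z₀ * z₀ * σ x * y)
      = (f x * g y - f y * g x) * (g z₀ * g z₀) := by
    intro x y
    have h1 := hfg (σ z₀ * z₀) (σ z₀ * z₀ * σ x * y)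
    have h2 := hfg (σ z₀ * z₀ * z₀) (z₀ * σ x * y)
    have hw : σ z₀ * z₀ * σ (σ z₀ * z₀ * σ x * y) * z₀
        = σ z₀ * z₀ * z₀ * σ (z₀ * σ x * y) * z₀ := by
      simp only [hσmul, hσinv, mul_assoc]
    rw [hw] at h1
    rw [hg0] at h1
    rw [hez, hgez, hfz0xy x y] at h2
    linear_combination h2 - h1
  refine ⟨hfe, fun x y => ?_⟩
  have h1 := hfg (σ z₀ * z₀) (x * σ y)
  have hw : σ z₀ * z₀ * σ (x * σ y) * z₀ = σ z₀ * z₀ * σ x * y * z₀ := by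
    simp only [hσmul, hσinv, mul_assoc]
  rw [hw, hg0] at h1
  have hM := hM' (σ z₀ * z₀ * σ x * y)
  rw [h1] at hM
  have hh := hheart x y
  -- g z₀ * (f E * g (x σ y)) = - f E * g(E σ x y) = -(K) g z₀^2
  have key : f (σ z₀ * z₀) * g (x * σ y) = (f y * g x - f x * g y) * g z₀ := by
    apply mul_left_cancel₀ hgz
    linear_combination hM - hh
  field_simp
  linear_combination key
end

section
/- Let f, g : S → ℂ be a solution of the Kannappan-sine subtraction law f(x σ(y) z₀) = f(x) g(y) − f(y) g(x) for all x, y ∈ S, such that f and g are linearly independent, g(σ(z₀) z₀) ≠ 0, and f(σ(z₀) z₀) = 0. Then, setting β := g(z₀) / g(σ(z₀) z₀), one has f(x σ(y)) = β f(x) g(y) − β f(y) g(x) for all x, y ∈ S. -/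
/-- Subcase 2.1 of the main theorem. If `f, g` solve the
Kannappan-sine subtraction law, are linearly independent, `g(σ(z₀)z₀) ≠ 0` and
`f(σ(z₀)z₀) = 0`, then with `β := g(z₀)/g(σ(z₀)z₀)` one has
`f(xσ(y)) = β f(x) g(y) − β f(y) g(x)`. -/
theorem kannappan_sine_sub_subcase21
    {S : Type*} [Semigroup S] (z₀ : S) (σ : S → S)
    (hσmul : ∀ x y : S, σ (x * y) = σ x * σ y)
    (hσinv : ∀ x : S, σ (σ x) = x)
    (f g : S → ℂ)
    (hfg : ∀ x y : S, f (x * σ y * z₀) = f x * g y - f y * g x)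
    (hind : ∀ a b : ℂ, (∀ x : S, a * f x + b * g x = 0) → a = 0 ∧ b = 0)
    (hg0 : g (σ z₀ * z₀) ≠ 0) (hf0 : f (σ z₀ * z₀) = 0) :
    ∀ x y : S,
      f (x * σ y) =
        g z₀ / g (σ z₀ * z₀) * f x * g y -
          g z₀ / g (σ z₀ * z₀) * f y * g x := by
  -- abbreviation: p := σ z₀ * z₀
  have hσp : σ (σ z₀ * z₀) = z₀ * σ z₀ := by rw [hσmul, hσinv]
  -- (1)  f (u * p) = f u * g z₀ - f z₀ * g u
  have h1 : ∀ u : S, f (u * (σ z₀ * z₀)) = f u * g z₀ - f z₀ * g u := by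
    intro u
    have := hfg u z₀
    rwa [mul_assoc] at this
  -- (3a)  g p * f (a * σ b) = f a * g (b * p) - f (b * p) * g a
  have h3a : ∀ a b : S,
      g (σ z₀ * z₀) * f (a * σ b) =
        f a * g (b * (σ z₀ * z₀)) - f (b * (σ z₀ * z₀)) * g a := by
    intro a b
    have e1 := hfg (a * σ b) (σ z₀ * z₀)
    have e2 := hfg a (b * (σ z₀ * z₀))
    have hpt : a * σ (b * (σ z₀ * z₀)) * z₀ = a * σ b * σ (σ z₀ * z₀) * z₀ := by
      rw [hσmul, ← mul_assoc]
    rw [hpt] at e2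
    rw [hf0] at e1
    linear_combination e2 - e1
  -- (D)  f a * (g z₀ * g b - g (b*p)) = f z₀ * (g (a*σb*z₀) + g a * g b)
  have hD : ∀ a b : S,
      f a * (g z₀ * g b - g (b * (σ z₀ * z₀))) =
        f z₀ * (g (a * σ b * z₀) + g a * g b) := by
    intro a b
    have e2 := hfg a (b * (σ z₀ * z₀))
    have e3 := hfg (a * σ b * z₀) z₀
    have e4 := hfg a b
    have e5 := h1 b
    have hpt : a * σ (b * (σ z₀ * z₀)) * z₀ = a * σ b * z₀ * σ z₀ * z₀ := by
      simp only [hσmul, hσinv, mul_assoc]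
    rw [hpt] at e2
    linear_combination e2 - e3 - g z₀ * e4 - g a * e5
  -- (4)  independence split at the point a * σ (b * σ(z₀z₀) * z₀) * z₀
  have h4 : ∀ b : S,
      (g (b * σ (z₀ * z₀) * z₀) - g (σ z₀ * z₀) * g b = 0) ∧
      (g (σ z₀ * z₀) * f b - f b * g (z₀ * z₀) + f (z₀ * z₀) * g b = 0) := by
    intro b
    refine hind _ _ ?_
    intro a
    have eL := hfg (a * σ b * z₀) (σ z₀ * z₀)
    have eR := hfg a (b * σ (z₀ * z₀) * z₀)
    have e6 := hfg b (z₀ * z₀)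
    have e4 := hfg a b
    have hpt : a * σ (b * σ (z₀ * z₀) * z₀) * z₀ =
        a * σ b * z₀ * σ (σ z₀ * z₀) * z₀ := by
      simp only [hσmul, hσinv, mul_assoc]
    rw [hpt] at eR
    rw [hf0] at eL
    linear_combination eL - eR + g (σ z₀ * z₀) * e4 + g a * e6
  -- consequently  g (z₀ z₀) = g p  and  f (z₀ z₀) = 0
  have hgz : g (σ z₀ * z₀) - g (z₀ * z₀) = 0 ∧ f (z₀ * z₀) = 0 := by
    refine hind _ _ ?_
    intro b
    linear_combination (h4 b).2
  -- (5)  f z₀ = 0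
  have hfz₀ : f z₀ = 0 := by
    have key : ∀ a : S,
        (g z₀ * g (z₀ * z₀) - g ((z₀ * z₀) * (σ z₀ * z₀))) * f a +
          (-(f z₀ * (g (σ z₀ * z₀) + g (z₀ * z₀)))) * g a = 0 := by
      intro a
      have h := hD a (z₀ * z₀)
      have hga := (h4 a).1
      linear_combination h + f z₀ * hga
    have h2 := (hind _ _ key).2
    have h3 : f z₀ * (2 * g (σ z₀ * z₀)) = 0 := by
      linear_combination -h2 + f z₀ * hgz.1
    rcases mul_eq_zero.mp h3 with h | h
    · exact h
    · exact absurd ((mul_eq_zero.mp h).resolve_left two_ne_zero) hg0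
  -- f is not identically zero
  have hx₀ : ∃ a : S, f a ≠ 0 := by
    by_contra h
    push_neg at h
    have := (hind 1 0 (by intro x; simp [h x])).1
    exact one_ne_zero this
  -- (6)  g (b * p) = g z₀ * g b
  have hgp : ∀ b : S, g (b * (σ z₀ * z₀)) = g z₀ * g b := by
    intro b
    obtain ⟨a, ha⟩ := hx₀
    have h := hD a b
    rw [hfz₀] at h
    have h' : f a * (g z₀ * g b - g (b * (σ z₀ * z₀))) = 0 := by
      linear_combination h
    rcases mul_eq_zero.mp h' with h'' | h''
    · exact absurd h'' ha
    · linear_combination -h''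
  -- finish
  intro x y
  have h := h3a x y
  rw [hgp y, h1 y, hfz₀] at h
  field_simp
  linear_combination h
end

section
/- Let f, g : S → ℂ be a solution of the Kannappan-sine subtraction law f(x σ(y) z₀) = f(x) g(y) − f(y) g(x) for all x, y ∈ S, such that f and g are linearly independent and g(σ(z₀) z₀) ≠ 0. Set δ := g(z₀) / g(σ(z₀) z₀) and α := f(σ(z₀) z₀) / g(σ(z₀) z₀), and let F := f − α g. Then F(x σ(y)) = δ F(x) g(y) − δ F(y) g(x) for all x, y ∈ S. -/
/-- Case 2 of the main theorem. If `f, g` solve the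
Kannappan-sine subtraction law, are linearly independent and `g(σ(z₀)z₀) ≠ 0`,
then with `δ := g(z₀)/g(σ(z₀)z₀)`, `α := f(σ(z₀)z₀)/g(σ(z₀)z₀)` and
`F := f − α g`, one has `F(xσ(y)) = δ F(x) g(y) − δ F(y) g(x)`. -/
theorem kannappan_sine_sub_case2
    {S : Type*} [Semigroup S] (z₀ : S) (σ : S → S)
    (hσmul : ∀ x y : S, σ (x * y) = σ x * σ y)
    (hσinv : ∀ x : S, σ (σ x) = x)
    (f g : S → ℂ)
    (hfg : ∀ x y : S, f (x * σ y * z₀) = f x * g y - f y * g x)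
    (hind : ∀ a b : ℂ, (∀ x : S, a * f x + b * g x = 0) → a = 0 ∧ b = 0)
    (hg0 : g (σ z₀ * z₀) ≠ 0)
    (δ α : ℂ) (hδ : δ = g z₀ / g (σ z₀ * z₀))
    (hα : α = f (σ z₀ * z₀) / g (σ z₀ * z₀))
    (F : S → ℂ) (hF : ∀ x : S, F x = f x - α * g x) :
    ∀ x y : S, F (x * σ y) = δ * F x * g y - δ * F y * g x := by
  have hf0 : ∃ w, f w ≠ 0 := by
    by_contra h
    push_neg at h
    have h1 := (hind 1 0 (fun x => by simp [h x])).1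
    exact one_ne_zero h1
  have key : ∀ x y z : S, x * σ y * z₀ * σ z * z₀ = x * σ (y * σ z₀ * z) * z₀ := by
    intro x y z
    simp only [hσmul, hσinv, mul_assoc]
  -- the G identity
  have hG : ∀ x y z : S, f z * g (x * σ y * z₀)
      = f x * (g y * g z - g (y * σ z₀ * z)) + g x * (f (y * σ z₀ * z) - f y * g z) := by
    intro x y z
    have h1 := hfg (x * σ y * z₀) z
    have h2 := hfg x (y * σ z₀ * z)
    have h3 := hfg x y
    rw [key x y z] at h1
    linear_combination h1 - h2 + g z * h3
  -- the main auxiliary identity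
  have need : ∀ x y : S, f x * (g (y * σ z₀ * z₀) - g z₀ * g y) + f z₀ * (g x * g y) = 0 := by
    by_cases hfz : f z₀ = 0
    · obtain ⟨w, hw⟩ := hf0
      have hk : ∀ y : S, g (y * σ z₀ * z₀) = g y * g z₀ := by
        intro y
        have h1 := hG w y z₀
        have h2 := hfg y z₀
        have h3 : f w * (g y * g z₀ - g (y * σ z₀ * z₀)) = 0 := by
          linear_combination -h1 - g w * h2 + (g (w * σ y * z₀) + g w * g y) * hfz
        rcases mul_eq_zero.mp h3 with h | h
        · exact absurd h hw
        · linear_combination -h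
      intro x y
      rw [hk y, hfz]
      ring
    · exfalso
      have hP : ∀ x y : S, f z₀ * g (x * σ y * z₀)
          = f x * (g y * g z₀ - g (y * σ z₀ * z₀)) - f z₀ * (g x * g y) := by
        intro x y
        have h1 := hG x y z₀
        have h2 := hfg y z₀
        linear_combination h1 + g x * h2
      have hi : ∀ y z : S, f z₀ * g (y * σ z₀ * z)
          = f z₀ * (g y * g z) - f z * (g y * g z₀ - g (y * σ z₀ * z₀)) := by
        intro y z
        have H := hind
          (f z * (g y * g z₀ - g (y * σ z₀ * z₀)) - f z₀ * (g y * g z - g (y * σ z₀ * z)))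
          (-(f z * f z₀ * g y) - f z₀ * (f (y * σ z₀ * z) - f y * g z))
          (fun x => by linear_combination f z₀ * hG x y z - f z * hP x y)
        linear_combination H.1
      have hv : ∀ y w : S, f y * (g w * g z₀ - g (w * σ z₀ * z₀))
          + f w * (g y * g z₀ - g (y * σ z₀ * z₀)) = 2 * f z₀ * (g y * g w) := by
        intro y w
        have H := hind
          (f z₀ * g y * (g w * g z₀ - g (w * σ z₀ * z₀))
            - f z₀ * (g y * g z₀ - g (y * σ z₀ * z₀)) * g w
            - f z₀ * (g (y * σ z₀ * w) * g z₀ - g ((y * σ z₀ * w) * σ z₀ * z₀)))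
          (2 * f z₀ * f z₀ * (g y * g w) - f z₀ * f y * (g w * g z₀ - g (w * σ z₀ * z₀))
            - f z₀ * f w * (g y * g z₀ - g (y * σ z₀ * z₀)))
          (fun x => by
            have a1 := hP (x * σ y * z₀) w
            rw [key x y w] at a1
            have a2 := hP x (y * σ z₀ * w)
            have a3 := hfg x y
            have a4 := hP x y
            have a5 := hi y w
            linear_combination f z₀ * a2 - f z₀ * a1
              - f z₀ * (g w * g z₀ - g (w * σ z₀ * z₀)) * a3
              + f z₀ * g w * a4 - f z₀ * g x * a5)
        have hB := H.2
        have : f z₀ * (f y * (g w * g z₀ - g (w * σ z₀ * z₀))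
            + f w * (g y * g z₀ - g (y * σ z₀ * z₀)) - 2 * f z₀ * (g y * g w)) = 0 := by
          linear_combination -hB
        rcases mul_eq_zero.mp this with h | h
        · exact absurd h hfz
        · linear_combination h
      obtain ⟨w₀, hw₀⟩ := hf0
      have hbil : ∀ y w : S,
          (2 * f z₀ * g w₀ * g w - 2 * (g w₀ * g z₀ - g (w₀ * σ z₀ * z₀)) * f w) * f y
          + (2 * f z₀ * g w₀ * f w - 2 * f z₀ * f w₀ * g w) * g y = 0 := by
        intro y w
        linear_combination f w₀ * hv y w - f y * hv w w₀ - f w * hv y w₀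
      have hlin : ∀ w : S, g w₀ * f w + (-(f w₀)) * g w = 0 := by
        intro w
        have h2 := (hind _ _ (fun y => hbil y w)).2
        have h3 : 2 * f z₀ * (g w₀ * f w - f w₀ * g w) = 0 := by linear_combination h2
        rcases mul_eq_zero.mp h3 with h | h
        · rcases mul_eq_zero.mp h with h' | h'
          · norm_num at h'
          · exact absurd h' hfz
        · linear_combination h
      have := (hind (g w₀) (-(f w₀)) hlin).2
      exact hw₀ (by linear_combination -this)
  -- key product identity for the conclusion
  have hE1 : ∀ x y : S, g (σ z₀ * z₀) * (f (x * σ y) - α * g (x * σ y))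
      = f x * g (y * σ z₀ * z₀) - f (y * σ z₀ * z₀) * g x := by
    intro x y
    have h1 := hfg (x * σ y) (σ z₀ * z₀)
    have h2 := hfg x (y * σ z₀ * z₀)
    have he : x * σ y * σ (σ z₀ * z₀) * z₀ = x * σ (y * σ z₀ * z₀) * z₀ := by
      simp only [hσmul, hσinv, mul_assoc]
    rw [he] at h1
    have hα' : α * g (σ z₀ * z₀) = f (σ z₀ * z₀) := by
      rw [hα]; field_simp
    linear_combination h2 - h1 - g (x * σ y) * hα'
  intro x y
  have h1 := hE1 x y
  have h2 := hfg y z₀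
  have hn := need x y
  have hδ' : δ * g (σ z₀ * z₀) = g z₀ := by
    rw [hδ]; field_simp
  rw [hF, hF, hF]
  apply mul_left_cancel₀ hg0
  linear_combination h1 - g x * h2 + hn - (f x * g y - f y * g x) * hδ'
end

section
/- Let γ, b ∈ ℂ with γ ≠ 0 and b ≠ 0, let c ∈ ℂ with c ≠ 1 and c ≠ −1, and let χ : S → ℂ be an exponential function with χ(z₀) = −2b/(1+c) and (χ∘σ)(z₀) = 2b/(1−c). Define f := (χ + χ∘σ)/(2γ) + c (χ − χ∘σ)/(2γ) and g := b (χ − χ∘σ). Then f(x σ(y) z₀) = f(x) g(y) − f(y) g(x) for all x, y ∈ S. -/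
/-- Solution family (3) of the main theorem solves the
Kannappan-sine subtraction law. -/
theorem kannappan_sine_sub_family3
    {S : Type*} [Semigroup S] (z₀ : S) (σ : S → S)
    (hσmul : ∀ x y : S, σ (x * y) = σ x * σ y)
    (hσinv : ∀ x : S, σ (σ x) = x)
    (γ b c : ℂ) (hγ : γ ≠ 0) (hb : b ≠ 0) (hc1 : c ≠ 1) (hc2 : c ≠ -1)
    (χ : S → ℂ) (hχmul : ∀ x y : S, χ (x * y) = χ x * χ y) (hχ0 : χ ≠ 0)
    (hz : χ z₀ = -2 * b / (1 + c)) (hz' : χ (σ z₀) = 2 * b / (1 - c))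
    (f g : S → ℂ)
    (hf : ∀ x : S, f x = (χ x + χ (σ x)) / (2 * γ) + c * (χ x - χ (σ x)) / (2 * γ))
    (hg : ∀ x : S, g x = b * (χ x - χ (σ x))) :
    ∀ x y : S, f (x * σ y * z₀) = f x * g y - f y * g x := by
  intro x y
  have h1 : (1 + c) ≠ 0 := by
    intro h; apply hc2; linear_combination h
  have h2 : (1 - c) ≠ 0 := by
    intro h; apply hc1; linear_combination -h
  rw [hf, hf, hf, hg, hg, hσmul, hσmul, hχmul, hχmul, hχmul, hχmul, hσinv, hz, hz']
  field_simp
  ring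
end

section
/- Let β, b ∈ ℂ with β ≠ 0 and b ≠ 0, let c ∈ ℂ, and let χ : S → ℂ be an exponential function with χ(z₀) = (χ∘σ)(z₀) = 1/β. Define f := b (χ − χ∘σ) and g := (χ + χ∘σ)/(2β) + c (χ − χ∘σ)/(2β). Then f(x σ(y) z₀) = f(x) g(y) − f(y) g(x) for all x, y ∈ S. -/
/-- Solution family (4) of the main theorem solves the
Kannappan-sine subtraction law. -/
theorem kannappan_sine_sub_family4
    {S : Type*} [Semigroup S] (z₀ : S) (σ : S → S)
    (hσmul : ∀ x y : S, σ (x * y) = σ x * σ y)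
    (hσinv : ∀ x : S, σ (σ x) = x)
    (β b c : ℂ) (hβ : β ≠ 0) (hb : b ≠ 0)
    (χ : S → ℂ) (hχmul : ∀ x y : S, χ (x * y) = χ x * χ y) (hχ0 : χ ≠ 0)
    (hz : χ z₀ = 1 / β) (hz' : χ (σ z₀) = 1 / β)
    (f g : S → ℂ)
    (hf : ∀ x : S, f x = b * (χ x - χ (σ x)))
    (hg : ∀ x : S, g x = (χ x + χ (σ x)) / (2 * β) + c * (χ x - χ (σ x)) / (2 * β)) :
    ∀ x y : S, f (x * σ y * z₀) = f x * g y - f y * g x := by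
  intro x y
  simp only [hf, hg, hχmul, hσmul, hσinv, hz, hz']
  field_simp
  ring
end

section
/- Let α, δ, b ∈ ℂ be nonzero, let c ∈ ℂ, and let χ : S → ℂ be an exponential function with χ(z₀) = 2b/(α(1+c) + 2bδ) and (χ∘σ)(z₀) = 2b/(α(c−1) + 2bδ), where α(1+c) + 2bδ ≠ 0 and α(c−1) + 2bδ ≠ 0. Define f := α (χ + χ∘σ)/(2δ) + (α c + 2bδ)(χ − χ∘σ)/(2δ) and g := (χ + χ∘σ)/(2δ) + c (χ − χ∘σ)/(2δ). Then f(x σ(y) z₀) = f(x) g(y) − f(y) g(x) for all x, y ∈ S. -/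
/-- Solution family (5) of the main theorem solves the
Kannappan-sine subtraction law. -/
theorem kannappan_sine_sub_family5
    {S : Type*} [Semigroup S] (z₀ : S) (σ : S → S)
    (hσmul : ∀ x y : S, σ (x * y) = σ x * σ y)
    (hσinv : ∀ x : S, σ (σ x) = x)
    (α δ b c : ℂ) (hα : α ≠ 0) (hδ : δ ≠ 0) (hb : b ≠ 0)
    (hden1 : α * (1 + c) + 2 * b * δ ≠ 0)
    (hden2 : α * (c - 1) + 2 * b * δ ≠ 0)
    (χ : S → ℂ) (hχmul : ∀ x y : S, χ (x * y) = χ x * χ y) (hχ0 : χ ≠ 0)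
    (hz : χ z₀ = 2 * b / (α * (1 + c) + 2 * b * δ))
    (hz' : χ (σ z₀) = 2 * b / (α * (c - 1) + 2 * b * δ))
    (f g : S → ℂ)
    (hf : ∀ x : S, f x = α * (χ x + χ (σ x)) / (2 * δ) +
      (α * c + 2 * b * δ) * (χ x - χ (σ x)) / (2 * δ))
    (hg : ∀ x : S, g x = (χ x + χ (σ x)) / (2 * δ) + c * (χ x - χ (σ x)) / (2 * δ)) :
    ∀ x y : S, f (x * σ y * z₀) = f x * g y - f y * g x := by
  intro x y
  have h1 : χ (x * σ y * z₀) = χ x * χ (σ y) * χ z₀ := by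
    rw [hχmul, hχmul]
  have h2 : χ (σ (x * σ y * z₀)) = χ (σ x) * χ y * χ (σ z₀) := by
    rw [hσmul, hσmul, hσinv, hχmul, hχmul]
  rw [hf, hf, hf, hg, hg, h1, h2, hz, hz']
  field_simp
  ring
end

section
/- Let γ, c ∈ ℂ be nonzero, let χ : S → ℂ be an exponential function with χ(x) ≠ 0 for every x ∈ S and χ∘σ = χ, and let A : S → ℂ be an additive function (A(xy) = A(x) + A(y) for all x, y ∈ S) with A∘σ = −A and χ(z₀) = A(z₀) = −1/c. Define f := γ(χ + c·Aχ) and g := Aχ, where (Aχ)(x) := A(x)χ(x). Then f(x σ(y) z₀) = f(x) g(y) − f(y) g(x) for all x, y ∈ S. -/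
/-- Solution family (6) of the main theorem (with `I_χ = ∅`, so
`Ψ_{Aχ,ρ} = Aχ`) solves the Kannappan-sine subtraction law. -/
theorem kannappan_sine_sub_family6
    {S : Type*} [Semigroup S] (z₀ : S) (σ : S → S)
    (hσmul : ∀ x y : S, σ (x * y) = σ x * σ y)
    (hσinv : ∀ x : S, σ (σ x) = x)
    (γ c : ℂ) (hγ : γ ≠ 0) (hc : c ≠ 0)
    (χ : S → ℂ) (hχmul : ∀ x y : S, χ (x * y) = χ x * χ y)
    (hχne : ∀ x : S, χ x ≠ 0)
    (hχσ : ∀ x : S, χ (σ x) = χ x)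
    (A : S → ℂ) (hA : ∀ x y : S, A (x * y) = A x + A y)
    (hAσ : ∀ x : S, A (σ x) = -A x)
    (hχz : χ z₀ = -1 / c) (hAz : A z₀ = -1 / c)
    (f g : S → ℂ)
    (hf : ∀ x : S, f x = γ * (χ x + c * (A x * χ x)))
    (hg : ∀ x : S, g x = A x * χ x) :
    ∀ x y : S, f (x * σ y * z₀) = f x * g y - f y * g x := by
  intro x y
  simp only [hf, hg, hχmul, hA, hχσ, hAσ, hχz, hAz]
  field_simp
  ring
end
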